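/- Let R ⊆ Q[[q]] be the smallest subring containing Q, L, L^{-1} and X. Then R is closed under the derivation D = q·d/dq; explicitly, D L = (L^4 − L)/3 and D X = (L^3 − 1)·X − X^2 + (2/9)·(L^3 − 1), so the differential ring generated over Q[L, L^{-1}] by X, DX, DDX, … equals the polynomial ring Q[L, L^{-1}][X]. -/

import Mathlib

/-- The operator `D = q·d/dq` on formal power series. -/
noncomputable def qD (F : PowerSeries ℚ) : PowerSeries ℚ :=
  PowerSeries.mk fun n => (n : ℚ) * PowerSeries.coeff n F

/-- `C1 = 1 + 3·∑_{d≥1} (-1)^d·d·(3d-1)!/(d!)^3·q^d`. -/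
noncomputable def C1series : PowerSeries ℚ :=
  PowerSeries.mk fun d =>
    if d = 0 then 1
    else 3 * (-1) ^ d * d * (Nat.factorial (3 * d - 1) : ℚ) / ((Nat.factorial d : ℚ)) ^ 3

open PowerSeries in
lemma coeff_qD (F : PowerSeries ℚ) (n : ℕ) :
    PowerSeries.coeff n (qD F) = (n : ℚ) * PowerSeries.coeff n F := by
  simp [qD]

open PowerSeries in
lemma qD_eq (F : PowerSeries ℚ) : qD F = PowerSeries.X * (d⁄dX ℚ) F := by
  ext n
  cases n with
  | zero => simp [coeff_qD]
  | succ n =>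
    rw [coeff_qD, coeff_succ_X_mul, coeff_derivative]
    push_cast
    ring

lemma qD_mul (f g : PowerSeries ℚ) : qD (f * g) = qD f * g + f * qD g := by
  simp only [qD_eq, Derivation.leibniz, smul_eq_mul, mul_add]
  ring

lemma qD_add (f g : PowerSeries ℚ) : qD (f + g) = qD f + qD g := by
  simp only [qD_eq, map_add, mul_add]

lemma qD_one : qD (1 : PowerSeries ℚ) = 0 := by
  simp [qD_eq]

lemma qD_smul (c : ℚ) (f : PowerSeries ℚ) : qD (c • f) = c • qD f := by
  ext n
  simp only [coeff_qD, map_smul, smul_eq_mul]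
  ring

lemma qD_X : qD (PowerSeries.X : PowerSeries ℚ) = PowerSeries.X := by
  simp [qD_eq]

lemma qD_C (r : ℚ) : qD (PowerSeries.C r) = 0 := by
  simp [qD_eq]

lemma qD_algebraMap (r : ℚ) : qD (algebraMap ℚ (PowerSeries ℚ) r) = 0 := by
  rw [Algebra.algebraMap_eq_smul_one, qD_smul, qD_one, smul_zero]

lemma fact3 (m : ℕ) :
    ((m + 3).factorial : ℚ) = (m + 3) * ((m + 2) * ((m + 1) * m.factorial)) := by
  rw [show m + 3 = (m + 2) + 1 from rfl, Nat.factorial_succ,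
    show m + 2 = (m + 1) + 1 from rfl, Nat.factorial_succ, Nat.factorial_succ]
  push_cast
  ring

/-- the Picard–Fuchs type ODE satisfied by `C1`. -/
lemma C1_ode :
    (1 + 27 * PowerSeries.X) * qD (qD C1series) + 27 * PowerSeries.X * qD C1series
      + 6 * PowerSeries.X * C1series = 0 := by
  have h27 : (27 : PowerSeries ℚ) = PowerSeries.C 27 := (map_ofNat _ _).symm
  have h6 : (6 : PowerSeries ℚ) = PowerSeries.C 6 := (map_ofNat _ _).symm
  have hform : (1 + 27 * PowerSeries.X) * qD (qD C1series) + 27 * PowerSeries.X * qD C1series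
      + 6 * PowerSeries.X * C1series
      = qD (qD C1series) + PowerSeries.X *
        (PowerSeries.C 27 * qD (qD C1series) + PowerSeries.C 27 * qD C1series
          + PowerSeries.C 6 * C1series) := by
    rw [← h27, ← h6]; ring
  rw [hform]
  ext n
  cases n with
  | zero =>
    rw [map_add, coeff_qD]
    simp
  | succ n =>
    rw [map_add, PowerSeries.coeff_succ_X_mul, map_add, map_add,
      PowerSeries.coeff_C_mul, PowerSeries.coeff_C_mul, PowerSeries.coeff_C_mul,
      coeff_qD, coeff_qD, coeff_qD, coeff_qD, map_zero]
    cases n with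
    | zero =>
      simp only [C1series, PowerSeries.coeff_mk]
      norm_num [Nat.factorial]
    | succ k =>
      simp only [C1series, PowerSeries.coeff_mk, if_neg (Nat.succ_ne_zero _)]
      have e1 : 3 * (k + 1 + 1) - 1 = (3 * k + 2) + 3 := by omega
      have e2 : 3 * (k + 1) - 1 = 3 * k + 2 := by omega
      rw [e1, e2, fact3]
      have hf : ((3 * k + 2).factorial : ℚ) ≠ 0 := by
        exact_mod_cast Nat.factorial_ne_zero _
      have hg : ((k + 1).factorial : ℚ) ≠ 0 := by
        exact_mod_cast Nat.factorial_ne_zero _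
      have hfac : ((k + 1 + 1).factorial : ℚ) = (k + 2) * (k + 1).factorial := by
        rw [Nat.factorial_succ]; push_cast; ring
      rw [hfac]
      have hk2 : ((k : ℚ) + 2) ≠ 0 := by positivity
      field_simp
      push_cast
      ring

lemma C1_ne_zero : C1series ≠ 0 := by
  intro h
  have : PowerSeries.coeff 0 C1series = 0 := by rw [h, map_zero]
  simp [C1series] at this

/-- The smallest subring `R = ℚ[L,L⁻¹][X] ⊆ ℚ[[q]]` is closed under `D = q·d/dq`:
explicitly `DL = (L⁴−L)/3` and `DX = (L³−1)X − X² + (2/9)(L³−1)`, so the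
differential ring generated by `X, DX, DDX, …` over `ℚ[L,L⁻¹]` is just
`ℚ[L,L⁻¹][X]`. -/
theorem stmt_1 (L Linv X : PowerSeries ℚ)
    (hL0 : PowerSeries.constantCoeff L = 1)
    (hL : L ^ 3 * (1 + 27 * PowerSeries.X) = 1)
    (hLinv : L * Linv = 1)
    (hX : X * C1series = qD C1series) :
    qD L = (1 / 3 : ℚ) • (L ^ 4 - L) ∧
    qD X = (L ^ 3 - 1) * X - X ^ 2 + (2 / 9 : ℚ) • (L ^ 3 - 1) ∧
    (∀ F ∈ Algebra.adjoin ℚ ({L, Linv, X} : Set (PowerSeries ℚ)),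
      qD F ∈ Algebra.adjoin ℚ ({L, Linv, X} : Set (PowerSeries ℚ))) ∧
    Algebra.adjoin ℚ (({L, Linv} : Set (PowerSeries ℚ)) ∪ Set.range fun n => qD^[n] X) =
      Algebra.adjoin ℚ ({L, Linv, X} : Set (PowerSeries ℚ)) := by
  set t : PowerSeries ℚ := PowerSeries.X with ht
  have h27 : (27 : PowerSeries ℚ) = PowerSeries.C 27 := (map_ofNat _ _).symm
  have hd27t : qD (27 * t) = 27 * t := by
    rw [h27, qD_mul, qD_C, qD_X]; ring
  have hd1 : qD (L ^ 3) * (1 + 27 * t) + L ^ 3 * (27 * t) = 0 := by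
    have h0 : qD (L ^ 3 * (1 + 27 * t)) = 0 := by rw [hL]; exact qD_one
    rw [qD_mul, qD_add, qD_one, hd27t, zero_add] at h0
    exact h0
  have hDL3 : qD (L ^ 3) = 3 * L ^ 2 * qD L := by
    rw [show L ^ 3 = L * L * L by ring, qD_mul, qD_mul]; ring
  rw [hDL3] at hd1
  set c3 : PowerSeries ℚ := PowerSeries.C (1 / 3) with hc3def
  have hc3 : (3 : PowerSeries ℚ) * c3 = 1 := by
    rw [hc3def, show (3 : PowerSeries ℚ) = PowerSeries.C 3 from (map_ofNat _ _).symm,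
      ← map_mul]
    norm_num
  have key1 : (3 : PowerSeries ℚ) * qD L = L ^ 4 - L := by
    linear_combination L * hd1 + (-3 * qD L - L) * hL
  have G1 : qD L = (1 / 3 : ℚ) • (L ^ 4 - L) := by
    rw [PowerSeries.smul_eq_C_mul, ← hc3def]
    linear_combination c3 * key1 - qD L * hc3
  -- second derivative formula
  set c9 : PowerSeries ℚ := PowerSeries.C (2 / 9) with hc9def
  have hc9 : (9 : PowerSeries ℚ) * c9 = 2 := by
    rw [hc9def, show (9 : PowerSeries ℚ) = PowerSeries.C 9 from (map_ofNat _ _).symm,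
      ← map_mul]
    norm_num
    exact map_ofNat _ 2
  have hode := C1_ode
  have hB : qD (qD C1series) = (L ^ 3 - 1) * qD C1series
      + c9 * ((L ^ 3 - 1) * C1series) := by
    linear_combination (L ^ 3) * hode
      + (-(qD (qD C1series)) - qD C1series - c9 * C1series) * hL
      + 3 * t * L ^ 3 * C1series * hc9
  have hdX : qD X * C1series + X * qD C1series = qD (qD C1series) := by
    have := congrArg qD hX
    rw [qD_mul] at this
    exact this
  have keyn : qD X * C1series
      = ((L ^ 3 - 1) * X - X ^ 2 + c9 * (L ^ 3 - 1)) * C1series := by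
    linear_combination hdX + X * hX - (L ^ 3 - 1) * hX + hB
  have G2 : qD X = (L ^ 3 - 1) * X - X ^ 2 + (2 / 9 : ℚ) • (L ^ 3 - 1) := by
    rw [PowerSeries.smul_eq_C_mul, ← hc9def]
    exact mul_right_cancel₀ C1_ne_zero keyn
  -- closure under qD
  set S := Algebra.adjoin ℚ ({L, Linv, X} : Set (PowerSeries ℚ)) with hS
  have hLS : L ∈ S := Algebra.subset_adjoin (by simp)
  have hLinvS : Linv ∈ S := Algebra.subset_adjoin (by simp)
  have hXS : X ∈ S := Algebra.subset_adjoin (by simp)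
  have hqDL : qD L ∈ S := by
    rw [G1]; exact Subalgebra.smul_mem _ (sub_mem (pow_mem hLS 4) hLS) _
  have hqDLinv : qD Linv ∈ S := by
    have h0 : qD (L * Linv) = 0 := by rw [hLinv]; exact qD_one
    rw [qD_mul] at h0
    have : qD Linv = -(Linv * Linv) * qD L := by
      linear_combination Linv * h0 + (-(qD Linv)) * hLinv
    rw [this]
    exact mul_mem (neg_mem (mul_mem hLinvS hLinvS)) hqDL
  have hqDX : qD X ∈ S := by
    rw [G2]
    exact add_mem (sub_mem (mul_mem (sub_mem (pow_mem hLS 3) (one_mem S)) hXS)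
      (pow_mem hXS 2)) (Subalgebra.smul_mem _ (sub_mem (pow_mem hLS 3) (one_mem S)) _)
  have hclosed : ∀ F ∈ S, qD F ∈ S := by
    intro F hF
    induction hF using Algebra.adjoin_induction with
    | mem x hx =>
      rcases hx with rfl | rfl | rfl
      · exact hqDL
      · exact hqDLinv
      · exact hqDX
    | algebraMap r => rw [qD_algebraMap]; exact zero_mem S
    | add x y hx hy ihx ihy => rw [qD_add]; exact add_mem ihx ihy
    | mul x y hx hy ihx ihy =>
      rw [qD_mul]; exact add_mem (mul_mem ihx hy) (mul_mem hx ihy)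
  refine ⟨G1, G2, hclosed, ?_⟩
  apply le_antisymm
  · apply Algebra.adjoin_le
    rintro z (hz | ⟨n, rfl⟩)
    · rcases hz with rfl | rfl
      · exact hLS
      · exact hLinvS
    · induction n with
      | zero => exact hXS
      | succ n ih =>
        have h' : qD^[n + 1] X = qD (qD^[n] X) := Function.iterate_succ_apply' _ _ _
        simpa [h'] using hclosed _ ih
  · apply Algebra.adjoin_le
    rintro z (rfl | rfl | rfl)
    · exact Algebra.subset_adjoin (Or.inl (by simp))
    · exact Algebra.subset_adjoin (Or.inl (by simp))
    · exact Algebra.subset_adjoin (Or.inr ⟨0, rfl⟩)
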